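/- Let Q = Q+(2n−1,q) with n ≥ 2 and let μ be an integer-valued function on the points of Q satisfying Property (*) with parameter x, where x is a positive integer. Then Σ_{P∈Q} μ(P) = x·θ_{n−1}. -/
import Mathlib


/-- `thgeom q k = 1 + q + ⋯ + q^(k-1)`, i.e. `θ_{k-1}` in the paper's notation,
so that `θ_j = thgeom q (j+1)` and `θ_{-1} = thgeom q 0 = 0`. -/
def thgeom (q k : ℕ) : ℕ := ∑ i ∈ Finset.range k, q ^ i

variable {𝔽 : Type} [Field 𝔽]

/-- The hyperbolic quadratic form `f(x) = x_1x_2 + x_3x_4 + ⋯ + x_{2m-1}x_{2m}` on `𝔽^{2m}`. -/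
def hypQ (m : ℕ) (v : Fin (2 * m) → 𝔽) : 𝔽 :=
  ∑ i : Fin m, v ⟨2 * i.val, by have := i.isLt; omega⟩ *
    v ⟨2 * i.val + 1, by have := i.isLt; omega⟩

/-- The polar bilinear form `b(x,y) = f(x+y) − f(x) − f(y)`. -/
def hypB (m : ℕ) (v w : Fin (2 * m) → 𝔽) : 𝔽 := hypQ m (v + w) - hypQ m v - hypQ m w

/-- The projective point `P` lies on the hyperbolic quadric. -/
def onQ {m : ℕ} (P : Projectivization 𝔽 (Fin (2 * m) → 𝔽)) : Prop := hypQ m P.rep = 0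

/-- The set of points of the hyperbolic quadric `Q⁺(2m−1, q)` inside `PG(2m−1,q)`. -/
def Qset (𝔽 : Type) [Field 𝔽] (m : ℕ) : Set (Projectivization 𝔽 (Fin (2 * m) → 𝔽)) :=
  {P | onQ P}

/-- Two points are collinear if the polar form vanishes on their representatives. -/
def Collin {m : ℕ} (P P' : Projectivization 𝔽 (Fin (2 * m) → 𝔽)) : Prop :=
  hypB m P.rep P'.rep = 0

/-- `perp P` is `P⊥`: the set of points of the quadric collinear with `P`. -/
def perp {m : ℕ} (P : Projectivization 𝔽 (Fin (2 * m) → 𝔽)) :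
    Set (Projectivization 𝔽 (Fin (2 * m) → 𝔽)) :=
  {P' | onQ P' ∧ Collin P P'}

/-- The set of projective points lying in a subspace `W` of the ambient space. -/
def pts {m : ℕ} (W : Submodule 𝔽 (Fin (2 * m) → 𝔽)) :
    Set (Projectivization 𝔽 (Fin (2 * m) → 𝔽)) :=
  {P | P.rep ∈ W}

/-- `LSet P0` is `L(P0)`: the set of lines of the quadric through `P0`
(projective lines = 2-dimensional subspaces of `V`, entirely contained in the quadric). -/
def LSet {m : ℕ} (P0 : Projectivization 𝔽 (Fin (2 * m) → 𝔽)) :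
    Set (Submodule 𝔽 (Fin (2 * m) → 𝔽)) :=
  {ℓ | Module.finrank 𝔽 ℓ = 2 ∧ P0.rep ∈ ℓ ∧ ∀ P ∈ pts ℓ, onQ P}

instance {𝔽 : Type} [Field 𝔽] [Finite 𝔽] {k : ℕ} :
    Finite (Projectivization 𝔽 (Fin k → 𝔽)) :=
  Quotient.finite _


section lemmas
variable {m : ℕ}


lemma hypB_eq (m : ℕ) (v w : Fin (2*m) → 𝔽) :
    hypB m v w = ∑ i : Fin m,
      (v ⟨2 * i.val, by omega⟩ * w ⟨2 * i.val + 1, by omega⟩ +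
       v ⟨2 * i.val + 1, by omega⟩ * w ⟨2 * i.val, by omega⟩) := by
  unfold hypB hypQ
  rw [← Finset.sum_sub_distrib, ← Finset.sum_sub_distrib]
  apply Finset.sum_congr rfl
  intro i _
  simp only [Pi.add_apply]
  ring

lemma hypB_comm (v w : Fin (2*m) → 𝔽) : hypB m v w = hypB m w v := by
  unfold hypB; rw [add_comm]; ring

lemma hypQ_add (v w : Fin (2*m) → 𝔽) : hypQ m (v + w) = hypQ m v + hypQ m w + hypB m v w := by
  unfold hypB; ring

lemma hypQ_smul (c : 𝔽) (v : Fin (2*m) → 𝔽) : hypQ m (c • v) = c^2 * hypQ m v := by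
  unfold hypQ
  rw [Finset.mul_sum]
  apply Finset.sum_congr rfl
  intro i _
  simp only [Pi.smul_apply, smul_eq_mul]
  ring

lemma hypB_smul_right (u : Fin (2*m) → 𝔽) (c : 𝔽) (v : Fin (2*m) → 𝔽) :
    hypB m u (c • v) = c * hypB m u v := by
  rw [hypB_eq, hypB_eq, Finset.mul_sum]
  apply Finset.sum_congr rfl
  intro i _
  simp only [Pi.smul_apply, smul_eq_mul]
  ring

lemma hypB_add_right (u v w : Fin (2*m) → 𝔽) :
    hypB m u (v + w) = hypB m u v + hypB m u w := by
  rw [hypB_eq, hypB_eq, hypB_eq, ← Finset.sum_add_distrib]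
  apply Finset.sum_congr rfl
  intro i _
  simp only [Pi.add_apply]
  ring

lemma hypB_self (u : Fin (2*m) → 𝔽) : hypB m u u = 2 * hypQ m u := by
  rw [hypB_eq]
  unfold hypQ
  rw [Finset.mul_sum]
  apply Finset.sum_congr rfl
  intro i _
  ring

lemma hypQ_add_smul (v u : Fin (2*m) → 𝔽) (c : 𝔽) :
    hypQ m (v + c • u) = hypQ m v + c * hypB m u v + c^2 * hypQ m u := by
  rw [hypQ_add, hypQ_smul, show hypB m v (c • u) = c * hypB m u v from by
    rw [hypB_smul_right, hypB_comm]]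
  ring

lemma hypB_add_smul (u v w : Fin (2*m) → 𝔽) (c : 𝔽) :
    hypB m u (v + c • w) = hypB m u v + c * hypB m u w := by
  rw [hypB_add_right, hypB_smul_right]

lemma hypQ_zero : hypQ m (0 : Fin (2*m) → 𝔽) = 0 := by
  unfold hypQ; simp

lemma hypB_zero_right (u : Fin (2*m) → 𝔽) : hypB m u 0 = 0 := by
  unfold hypB; simp [hypQ_zero]


lemma hypB_single_even (u : Fin (2*m) → 𝔽) (i : Fin m) :
    hypB m u (Pi.single (⟨2 * i.val, by omega⟩ : Fin (2*m)) (1:𝔽)) = u ⟨2 * i.val + 1, by omega⟩ := by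
  rw [hypB_eq]
  rw [Finset.sum_eq_single i]
  · rw [Pi.single_apply, Pi.single_apply, if_neg (by simp only [ne_eq, Fin.mk.injEq]; omega),
      if_pos rfl]
    ring
  · intro k _ hk
    rw [Pi.single_apply, Pi.single_apply, if_neg (by simp only [ne_eq, Fin.mk.injEq]; omega),
      if_neg (by simp only [ne_eq, Fin.mk.injEq]; intro h; exact hk (Fin.ext (by omega)))]
    ring
  · simp

lemma hypB_single_odd (u : Fin (2*m) → 𝔽) (i : Fin m) :
    hypB m u (Pi.single (⟨2 * i.val + 1, by omega⟩ : Fin (2*m)) (1:𝔽)) = u ⟨2 * i.val, by omega⟩ := by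
  rw [hypB_eq]
  rw [Finset.sum_eq_single i]
  · rw [Pi.single_apply, Pi.single_apply, if_pos rfl, if_neg (by simp only [ne_eq, Fin.mk.injEq]; omega)]
    ring
  · intro k _ hk
    rw [Pi.single_apply, Pi.single_apply,
      if_neg (by simp only [ne_eq, Fin.mk.injEq]; intro h; exact hk (Fin.ext (by omega))),
      if_neg (by simp only [ne_eq, Fin.mk.injEq]; omega)]
    ring
  · simp

lemma exists_hypB_ne_zero (u : Fin (2*m) → 𝔽) (hu : u ≠ 0) : ∃ w, hypB m u w ≠ 0 := by
  have : ∃ j, u j ≠ 0 := by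
    by_contra h
    push_neg at h
    exact hu (funext fun j => h j)
  obtain ⟨j, hj⟩ := this
  rcases Nat.even_or_odd j.val with ⟨i, hi⟩ | ⟨i, hi⟩
  · have him : i < m := by have := j.isLt; omega
    refine ⟨Pi.single (⟨2 * i + 1, by omega⟩ : Fin (2*m)) (1:𝔽), ?_⟩
    rw [hypB_single_odd u ⟨i, him⟩]
    have : (⟨2 * i, by omega⟩ : Fin (2*m)) = j := Fin.ext (by simp; omega)
    rw [this]; exact hj
  · have him : i < m := by have := j.isLt; omega
    refine ⟨Pi.single (⟨2 * i, by omega⟩ : Fin (2*m)) (1:𝔽), ?_⟩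
    rw [hypB_single_even u ⟨i, him⟩]
    have : (⟨2 * i + 1, by omega⟩ : Fin (2*m)) = j := Fin.ext (by simp; omega)
    rw [this]; exact hj

end lemmas


section generic
variable {α : Type} [Finite α]

lemma card_split (p q : α → Prop) :
    Nat.card {x // p x} = Nat.card {x : α // p x ∧ q x} + Nat.card {x : α // p x ∧ ¬ q x} := by
  classical
  rw [← Nat.card_sum]
  apply Nat.card_congr
  exact {
    toFun := fun x => if h : q x.1 then Sum.inl ⟨x.1, x.2, h⟩ else Sum.inr ⟨x.1, x.2, h⟩
    invFun := fun s => s.elim (fun y => ⟨y.1, y.2.1⟩) (fun y => ⟨y.1, y.2.1⟩)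
    left_inv := by intro x; by_cases h : q x.1 <;> simp [h]
    right_inv := by
      rintro (y | y)
      · simp [y.2.2]
      · simp [y.2.2] }

lemma card_ne_zero_field {𝔽 : Type} [Field 𝔽] [Fintype 𝔽] :
    Nat.card {b : 𝔽 // ¬ b = 0} = Fintype.card 𝔽 - 1 := by
  classical
  have e : 𝔽ˣ ≃ {b : 𝔽 // ¬ b = 0} :=
    (unitsEquivNeZero).trans (Equiv.subtypeEquivRight (by intro b; simp [ne_eq]))
  rw [← Nat.card_congr e, Nat.card_eq_fintype_card, Fintype.card_units]

end generic
set_option linter.unusedSectionVars false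
section counting
variable {𝔽 : Type} [Field 𝔽] [Fintype 𝔽] {m : ℕ}

lemma add_smul_cancel {M : Type} [AddCommGroup M] [Module 𝔽 M] (v u : M) (a b : 𝔽)
    (h : a + b = 0) : v + a • u + b • u = v := by
  rw [add_assoc, ← add_smul, h, zero_smul, add_zero]

lemma card_fun_eq : Nat.card (Fin (2*m) → 𝔽) = Fintype.card 𝔽 ^ (2*m) := by
  rw [Nat.card_eq_fintype_card, Fintype.card_fun, Fintype.card_fin]

/-- All level sets of `hypB u ·` have size `q^(2m-1)` (stated multiplied by `q`). -/
lemma card_hyp_level (u w1 : Fin (2*m) → 𝔽) (hw1 : hypB m u w1 = 1) (t : 𝔽) :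
    Nat.card {v : Fin (2*m) → 𝔽 // hypB m u v = t} * Fintype.card 𝔽
      = Fintype.card 𝔽 ^ (2*m) := by
  have e : {v : Fin (2*m) → 𝔽 // hypB m u v = t} × 𝔽 ≃ (Fin (2*m) → 𝔽) := {
    toFun := fun p => p.1.1 + (p.2 - t) • w1
    invFun := fun v => (⟨v + (t - hypB m u v) • w1, by
        rw [hypB_add_smul, hw1]; ring⟩, hypB m u v)
    left_inv := by
      rintro ⟨⟨v, hv⟩, s⟩
      have hB : hypB m u (v + (s - t) • w1) = s := by
        rw [hypB_add_smul, hv, hw1]; ring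
      refine Prod.ext (Subtype.ext ?_) ?_
      · simp only [hB]
        exact add_smul_cancel v w1 (s - t) (t - s) (by ring)
      · exact hB
    right_inv := by
      intro v
      simp only
      exact add_smul_cancel v w1 (t - hypB m u v) (hypB m u v - t) (by ring) }
  calc Nat.card {v : Fin (2*m) → 𝔽 // hypB m u v = t} * Fintype.card 𝔽
      = Nat.card ({v : Fin (2*m) → 𝔽 // hypB m u v = t} × 𝔽) := by
        rw [Nat.card_prod, Nat.card_eq_fintype_card (α := 𝔽)]
    _ = Fintype.card 𝔽 ^ (2*m) := by rw [Nat.card_congr e, card_fun_eq]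

lemma exists_hypB_eq_one (u : Fin (2*m) → 𝔽) (hu : u ≠ 0) : ∃ w1, hypB m u w1 = 1 := by
  obtain ⟨w, hw⟩ := exists_hypB_ne_zero u hu
  exact ⟨(hypB m u w)⁻¹ • w, by rw [hypB_smul_right, inv_mul_cancel₀ hw]⟩

/-- The fiber `{Q=0, B u v = 1}` has size `q^(2m-2)` (stated multiplied by `q`). -/
lemma card_fiber_one (u : Fin (2*m) → 𝔽) (hu0 : hypQ m u = 0) :
    Nat.card {v : Fin (2*m) → 𝔽 // hypQ m v = 0 ∧ hypB m u v = 1} * Fintype.card 𝔽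
      = Nat.card {v : Fin (2*m) → 𝔽 // hypB m u v = 1} := by
  have hBuu : hypB m u u = 0 := by rw [hypB_self, hu0, mul_zero]
  have e : {v : Fin (2*m) → 𝔽 // hypQ m v = 0 ∧ hypB m u v = 1} × 𝔽 ≃
      {v : Fin (2*m) → 𝔽 // hypB m u v = 1} := {
    toFun := fun p => ⟨p.1.1 + p.2 • u, by
      rw [hypB_add_smul, p.1.2.2, hBuu]; ring⟩
    invFun := fun v => (⟨v.1 + (-(hypQ m v.1)) • u, by
      constructor
      · rw [hypQ_add_smul, v.2, hu0]; ring
      · rw [hypB_add_smul, v.2, hBuu]; ring⟩, hypQ m v.1)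
    left_inv := by
      rintro ⟨⟨v, hv1, hv2⟩, s⟩
      have hQ : hypQ m (v + s • u) = s := by
        rw [hypQ_add_smul, hv1, hv2, hu0]; ring
      refine Prod.ext (Subtype.ext ?_) ?_
      · simp only [hQ]
        exact add_smul_cancel v u s (-s) (by ring)
      · exact hQ
    right_inv := by
      rintro ⟨v, hv⟩
      refine Subtype.ext ?_
      simp only
      exact add_smul_cancel v u (-(hypQ m v)) (hypQ m v) (by ring) }
  calc Nat.card {v : Fin (2*m) → 𝔽 // hypQ m v = 0 ∧ hypB m u v = 1} * Fintype.card 𝔽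
      = Nat.card ({v : Fin (2*m) → 𝔽 // hypQ m v = 0 ∧ hypB m u v = 1} × 𝔽) := by
        rw [Nat.card_prod, Nat.card_eq_fintype_card (α := 𝔽)]
    _ = Nat.card {v : Fin (2*m) → 𝔽 // hypB m u v = 1} := Nat.card_congr e

/-- Scaling: the nonzero-`B` part of the cone is `(q-1)` copies of the `B = 1` fiber. -/
lemma card_fiber_ne (u : Fin (2*m) → 𝔽) :
    Nat.card {v : Fin (2*m) → 𝔽 // hypQ m v = 0 ∧ ¬ hypB m u v = 0}
      = (Fintype.card 𝔽 - 1) *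
        Nat.card {v : Fin (2*m) → 𝔽 // hypQ m v = 0 ∧ hypB m u v = 1} := by
  have e : {v : Fin (2*m) → 𝔽 // hypQ m v = 0 ∧ ¬ hypB m u v = 0} ≃
      {b : 𝔽 // ¬ b = 0} × {v : Fin (2*m) → 𝔽 // hypQ m v = 0 ∧ hypB m u v = 1} := {
    toFun := fun v => (⟨hypB m u v.1, v.2.2⟩, ⟨(hypB m u v.1)⁻¹ • v.1, by
      constructor
      · rw [hypQ_smul, v.2.1, mul_zero]
      · rw [hypB_smul_right, inv_mul_cancel₀ v.2.2]⟩)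
    invFun := fun p => ⟨p.1.1 • p.2.1, by
      constructor
      · rw [hypQ_smul, p.2.2.1, mul_zero]
      · rw [hypB_smul_right, p.2.2.2, mul_one]; exact p.1.2⟩
    left_inv := by
      rintro ⟨v, hv1, hv2⟩
      refine Subtype.ext ?_
      simp only [smul_smul]
      rw [mul_inv_cancel₀ hv2, one_smul]
    right_inv := by
      rintro ⟨⟨b, hb⟩, ⟨v, hv1, hv2⟩⟩
      have hB : hypB m u (b • v) = b := by rw [hypB_smul_right, hv2, mul_one]
      refine Prod.ext (Subtype.ext hB) (Subtype.ext ?_)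
      simp only [hB, smul_smul]
      rw [inv_mul_cancel₀ hb, one_smul] }
  rw [Nat.card_congr e, Nat.card_prod, card_ne_zero_field]

/-- Master relation: cone size vs perp-section size. -/
lemma cone_split (u : Fin (2*m) → 𝔽) (hu : u ≠ 0) (hu0 : hypQ m u = 0) :
    Nat.card {v : Fin (2*m) → 𝔽 // hypQ m v = 0} * Fintype.card 𝔽 ^ 2
      = Nat.card {v : Fin (2*m) → 𝔽 // hypQ m v = 0 ∧ hypB m u v = 0} * Fintype.card 𝔽 ^ 2
        + (Fintype.card 𝔽 - 1) * Fintype.card 𝔽 ^ (2*m) := by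
  obtain ⟨w1, hw1⟩ := exists_hypB_eq_one u hu
  have h1 := card_split (fun v : Fin (2*m) → 𝔽 => hypQ m v = 0) (fun v => hypB m u v = 0)
  have h2 := card_fiber_ne (𝔽 := 𝔽) (m := m) u
  have h3 := card_fiber_one (𝔽 := 𝔽) (m := m) u hu0
  have h4 := card_hyp_level (𝔽 := 𝔽) (m := m) u w1 hw1 1
  set q := Fintype.card 𝔽
  calc Nat.card {v : Fin (2*m) → 𝔽 // hypQ m v = 0} * q ^ 2
      = (Nat.card {v : Fin (2*m) → 𝔽 // hypQ m v = 0 ∧ hypB m u v = 0}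
        + Nat.card {v : Fin (2*m) → 𝔽 // hypQ m v = 0 ∧ ¬ hypB m u v = 0}) * q^2 := by rw [← h1]
    _ = Nat.card {v : Fin (2*m) → 𝔽 // hypQ m v = 0 ∧ hypB m u v = 0} * q^2
        + (q - 1) * ((Nat.card {v : Fin (2*m) → 𝔽 // hypQ m v = 0 ∧ hypB m u v = 1} * q) * q) := by
          rw [h2]; ring
    _ = _ := by rw [h3, h4]

end counting
section recursion
set_option linter.unusedSectionVars false
variable {𝔽 : Type} [Field 𝔽] {m : ℕ}

/-- Drop the first two coordinates. -/
def tail2 (v : Fin (2*(m+1)) → 𝔽) : Fin (2*m) → 𝔽 := fun j => v ⟨j.val + 2, by omega⟩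

/-- Prepend two coordinates. -/
def extend2 (a b : 𝔽) (w : Fin (2*m) → 𝔽) : Fin (2*(m+1)) → 𝔽 := fun j =>
  if h0 : j.val = 0 then a else if h1 : j.val = 1 then b else w ⟨j.val - 2, by omega⟩

lemma tail2_extend2 (a b : 𝔽) (w : Fin (2*m) → 𝔽) : tail2 (extend2 a b w) = w := by
  funext j
  simp only [tail2, extend2]
  rw [dif_neg (by omega), dif_neg (by omega)]
  congr 1

lemma extend2_zero (a b : 𝔽) (w : Fin (2*m) → 𝔽) :
    extend2 a b w ⟨0, by omega⟩ = a := by simp [extend2]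

lemma extend2_one (a b : 𝔽) (w : Fin (2*m) → 𝔽) :
    extend2 a b w ⟨1, by omega⟩ = b := by simp [extend2]

lemma extend2_eta (v : Fin (2*(m+1)) → 𝔽) :
    extend2 (v ⟨0, by omega⟩) (v ⟨1, by omega⟩) (tail2 v) = v := by
  funext j
  simp only [extend2, tail2]
  split_ifs with h0 h1
  · congr 1; exact Fin.ext (by simp [h0])
  · congr 1; exact Fin.ext (by simp [h1])
  · congr 1; exact Fin.ext (by simp; omega)

lemma hypQ_split (v : Fin (2*(m+1)) → 𝔽) :
    hypQ (m+1) v = v ⟨0, by omega⟩ * v ⟨1, by omega⟩ + hypQ m (tail2 v) := by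
  unfold hypQ
  rw [Fin.sum_univ_succ]
  congr 1

lemma hypQ_extend2 (a b : 𝔽) (w : Fin (2*m) → 𝔽) :
    hypQ (m+1) (extend2 a b w) = a * b + hypQ m w := by
  rw [hypQ_split, extend2_zero, extend2_one, tail2_extend2]

end recursion
section conecount
set_option linter.unusedSectionVars false
variable {𝔽 : Type} [Field 𝔽] [Fintype 𝔽] {m : ℕ}

lemma card_cone_slice (m : ℕ) :
    Nat.card {v : Fin (2*(m+1)) → 𝔽 // hypQ (m+1) v = 0 ∧ v ⟨1, by omega⟩ = 0}
      = Fintype.card 𝔽 * Nat.card {w : Fin (2*m) → 𝔽 // hypQ m w = 0} := by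
  have e : {v : Fin (2*(m+1)) → 𝔽 // hypQ (m+1) v = 0 ∧ v ⟨1, by omega⟩ = 0}
      ≃ 𝔽 × {w : Fin (2*m) → 𝔽 // hypQ m w = 0} := {
    toFun := fun v => (v.1 ⟨0, by omega⟩, ⟨tail2 v.1, by
      have h := hypQ_split v.1
      rw [v.2.1, v.2.2, mul_zero, zero_add] at h
      exact h.symm⟩)
    invFun := fun p => ⟨extend2 p.1 0 p.2.1, by
      constructor
      · rw [hypQ_extend2, p.2.2]; ring
      · exact extend2_one p.1 0 p.2.1⟩
    left_inv := by
      rintro ⟨v, hv1, hv2⟩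
      refine Subtype.ext ?_
      simp only
      rw [← hv2]
      exact extend2_eta v
    right_inv := by
      rintro ⟨a, ⟨w, hw⟩⟩
      refine Prod.ext ?_ (Subtype.ext ?_)
      · exact extend2_zero a 0 w
      · exact tail2_extend2 a 0 w }
  rw [Nat.card_congr e, Nat.card_prod, Nat.card_eq_fintype_card (α := 𝔽)]

lemma cone_card_succ (m : ℕ) :
    Nat.card {v : Fin (2*(m+1)) → 𝔽 // hypQ (m+1) v = 0} * Fintype.card 𝔽 ^ 2
      = (Fintype.card 𝔽 * Nat.card {w : Fin (2*m) → 𝔽 // hypQ m w = 0}) * Fintype.card 𝔽 ^ 2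
        + (Fintype.card 𝔽 - 1) * Fintype.card 𝔽 ^ (2*(m+1)) := by
  set u : Fin (2*(m+1)) → 𝔽 := Pi.single ⟨0, by omega⟩ 1 with hudef
  have hu : u ≠ 0 := by
    intro h
    have := congrFun h ⟨0, by omega⟩
    rw [hudef] at this
    simp [Pi.single_apply] at this
  have htail : tail2 u = 0 := by
    funext j
    rw [hudef]
    simp only [tail2, Pi.single_apply, Pi.zero_apply]
    rw [if_neg (by simp only [ne_eq, Fin.mk.injEq]; omega)]
  have huQ : hypQ (m+1) u = 0 := by
    rw [hypQ_split, htail, hypQ_zero, hudef]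
    simp [Pi.single_apply, Fin.ext_iff]
  have hBu : ∀ v : Fin (2*(m+1)) → 𝔽, hypB (m+1) u v = v ⟨1, by omega⟩ := by
    intro v
    rw [hypB_comm]
    exact hypB_single_even v ⟨0, by omega⟩
  have hsplit := cone_split u hu huQ
  have e : {v : Fin (2*(m+1)) → 𝔽 // hypQ (m+1) v = 0 ∧ hypB (m+1) u v = 0}
      ≃ {v : Fin (2*(m+1)) → 𝔽 // hypQ (m+1) v = 0 ∧ v ⟨1, by omega⟩ = 0} :=
    Equiv.subtypeEquivRight (fun v => by rw [hBu v])
  rw [Nat.card_congr e, card_cone_slice] at hsplit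
  exact hsplit

lemma cone_card (m : ℕ) :
    Nat.card {v : Fin (2*m) → 𝔽 // hypQ m v = 0} * Fintype.card 𝔽
      = Fintype.card 𝔽 ^ (2*m) + (Fintype.card 𝔽 - 1) * Fintype.card 𝔽 ^ m := by
  have hq1 : 1 ≤ Fintype.card 𝔽 := Fintype.card_pos
  induction m with
  | zero =>
    have hall : ∀ v : Fin (2*0) → 𝔽, hypQ 0 v = 0 := by
      intro v; unfold hypQ; simp
    have e : {v : Fin (2*0) → 𝔽 // hypQ 0 v = 0} ≃ (Fin (2*0) → 𝔽) :=
      Equiv.subtypeUnivEquiv hall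
    rw [Nat.card_congr e, card_fun_eq]
    simp only [Nat.mul_zero, pow_zero]
    omega
  | succ m ih =>
    have hrec := cone_card_succ (𝔽 := 𝔽) m
    have hq : 0 < Fintype.card 𝔽 ^ 2 := pow_pos Fintype.card_pos 2
    apply Nat.eq_of_mul_eq_mul_right hq
    set q := Fintype.card 𝔽
    set C := Nat.card {v : Fin (2*(m+1)) → 𝔽 // hypQ (m+1) v = 0}
    calc C * q * q^2 = (C * q^2) * q := by ring
      _ = ((Fintype.card 𝔽 * Nat.card {w : Fin (2*m) → 𝔽 // hypQ m w = 0}) * Fintype.card 𝔽 ^ 2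
          + (Fintype.card 𝔽 - 1) * Fintype.card 𝔽 ^ (2*(m+1))) * q := by rw [hrec]
      _ = (Nat.card {w : Fin (2*m) → 𝔽 // hypQ m w = 0} * q) * q^3
          + (q - 1) * q^(2*m+3) := by ring
      _ = (q^(2*m) + (q-1) * q^m) * q^3 + (q - 1) * q^(2*m+3) := by rw [ih]
      _ = (q ^ (2*(m+1)) + (q - 1) * q^(m+1)) * q ^ 2 := by
          zify [hq1]
          ring
end conecount
section projcount
set_option linter.unusedSectionVars false
variable {𝔽 : Type} [Field 𝔽] [Fintype 𝔽] {m : ℕ}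

lemma smul_cancel_ne {v : Fin (2*m) → 𝔽} (hv : v ≠ 0) {c c' : 𝔽}
    (h : c • v = c' • v) : c = c' := by
  obtain ⟨j, hj⟩ := Function.ne_iff.mp hv
  have := congrFun h j
  simp only [Pi.smul_apply, smul_eq_mul] at this
  exact mul_right_cancel₀ hj this

lemma mk_smul_rep (c : 𝔽) (hc : c ≠ 0) (P : Projectivization 𝔽 (Fin (2*m) → 𝔽)) :
    Projectivization.mk 𝔽 (c • P.rep) (smul_ne_zero hc P.rep_nonzero) = P := by
  conv_rhs => rw [← Projectivization.mk_rep P]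
  rw [Projectivization.mk_eq_mk_iff]
  exact ⟨Units.mk0 c hc, rfl⟩

lemma card_pd_zero (pd : (Fin (2*m) → 𝔽) → Prop) (h0 : pd 0) :
    Nat.card {v : Fin (2*m) → 𝔽 // pd v ∧ v = 0} = 1 := by
  haveI : Nonempty {v : Fin (2*m) → 𝔽 // pd v ∧ v = 0} := ⟨⟨0, h0, rfl⟩⟩
  haveI : Subsingleton {v : Fin (2*m) → 𝔽 // pd v ∧ v = 0} :=
    ⟨fun a b => Subtype.ext (a.2.2.trans b.2.2.symm)⟩
  exact Nat.card_unique

lemma proj_count (pd : (Fin (2*m) → 𝔽) → Prop)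
    (hpd : ∀ (c : 𝔽), c ≠ 0 → ∀ v, pd (c • v) ↔ pd v) :
    Nat.card {P : Projectivization 𝔽 (Fin (2*m) → 𝔽) // pd P.rep} * (Fintype.card 𝔽 - 1)
      = Nat.card {v : Fin (2*m) → 𝔽 // pd v ∧ ¬ v = 0} := by
  have hf : Function.Bijective
      (fun p : {P : Projectivization 𝔽 (Fin (2*m) → 𝔽) // pd P.rep} × {b : 𝔽 // ¬ b = 0} =>
        (⟨p.2.1 • p.1.1.rep, (hpd p.2.1 p.2.2 _).mpr p.1.2,
          smul_ne_zero p.2.2 p.1.1.rep_nonzero⟩ : {v : Fin (2*m) → 𝔽 // pd v ∧ ¬ v = 0})) := by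
    constructor
    · rintro ⟨⟨P, hP⟩, ⟨c, hc⟩⟩ ⟨⟨P', hP'⟩, ⟨c', hc'⟩⟩ h
      have hval : c • P.rep = c' • P'.rep := congrArg Subtype.val h
      have hPP : P = P' := by
        rw [← mk_smul_rep c hc P, ← mk_smul_rep c' hc' P']
        exact Projectivization.mk_eq_mk_iff' 𝔽 _ _ _ _ |>.mpr ⟨1, by simp [hval]⟩
      subst hPP
      have : c = c' := smul_cancel_ne P.rep_nonzero hval
      simp [this]
    · rintro ⟨v, hv, hv0⟩
      set P := Projectivization.mk 𝔽 v hv0 with hPdef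
      have hmk : Projectivization.mk 𝔽 P.rep P.rep_nonzero = Projectivization.mk 𝔽 v hv0 :=
        Projectivization.mk_rep P
      obtain ⟨a, ha⟩ := (Projectivization.mk_eq_mk_iff 𝔽 _ _ _ _).mp hmk
      have hrep : pd P.rep := by
        rw [← ha]
        exact (hpd a.1 a.ne_zero v).mpr hv
      refine ⟨(⟨P, hrep⟩, ⟨(a⁻¹ : 𝔽ˣ).1, (a⁻¹ : 𝔽ˣ).ne_zero⟩), ?_⟩
      refine Subtype.ext ?_
      simp only
      rw [← ha]
      exact inv_smul_smul a v
  have e := Equiv.ofBijective _ hf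
  rw [← Nat.card_congr e, Nat.card_prod, card_ne_zero_field]

end projcount
section interface
set_option linter.unusedSectionVars false
variable {𝔽 : Type} [Field 𝔽] [Fintype 𝔽] {m : ℕ}

lemma quadric_point_count (m : ℕ) :
    (Nat.card {P : Projectivization 𝔽 (Fin (2*m) → 𝔽) // onQ P} : ℤ)
        * ((Fintype.card 𝔽 : ℤ) - 1) * (Fintype.card 𝔽 : ℤ) + (Fintype.card 𝔽 : ℤ)
      = (Fintype.card 𝔽 : ℤ) ^ (2*m)
        + ((Fintype.card 𝔽 : ℤ) - 1) * (Fintype.card 𝔽 : ℤ) ^ m := by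
  have hq1 : 1 ≤ Fintype.card 𝔽 := Fintype.card_pos
  have hpc := proj_count (𝔽 := 𝔽) (m := m) (fun v => hypQ m v = 0)
    (fun c hc v => by
      have hc2 : c^2 ≠ 0 := pow_ne_zero _ hc
      simp [hypQ_smul, mul_eq_zero, hc, hc2])
  have hsplit := card_split (fun v : Fin (2*m) → 𝔽 => hypQ m v = 0) (fun v => v = 0)
  have hzero := card_pd_zero (fun v : Fin (2*m) → 𝔽 => hypQ m v = 0) hypQ_zero
  have hcone := cone_card (𝔽 := 𝔽) m
  have hbridge : Nat.card {P : Projectivization 𝔽 (Fin (2*m) → 𝔽) // onQ P}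
      = Nat.card {P : Projectivization 𝔽 (Fin (2*m) → 𝔽) // hypQ m P.rep = 0} :=
    Nat.card_congr (Equiv.subtypeEquivRight fun _ => Iff.rfl)
  rw [hzero] at hsplit
  -- hsplit : Nat.card {Q=0} = 1 + Nat.card {Q=0 ∧ ¬ v=0}
  -- hpc : Nat.card {P // Q rep = 0} * (q-1) = Nat.card {Q=0 ∧ ¬v=0}
  have hN : (Nat.card {v : Fin (2*m) → 𝔽 // hypQ m v = 0} : ℤ)
      = (Nat.card {P : Projectivization 𝔽 (Fin (2*m) → 𝔽) // onQ P} : ℤ)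
        * ((Fintype.card 𝔽 : ℤ) - 1) + 1 := by
    rw [hbridge]
    have := congrArg (fun t : ℕ => (t : ℤ)) hsplit
    push_cast at this ⊢
    rw [this]
    have := congrArg (fun t : ℕ => (t : ℤ)) hpc
    push_cast [hq1] at this
    rw [← this]
    ring
  have := congrArg (fun t : ℕ => (t : ℤ)) hcone
  push_cast [hq1] at this
  rw [hN] at this
  linear_combination this

lemma perp_point_count (m : ℕ) (P0 : Projectivization 𝔽 (Fin (2*m) → 𝔽)) (h0 : onQ P0) :
    (Nat.card {P : Projectivization 𝔽 (Fin (2*m) → 𝔽) // onQ P ∧ Collin P0 P} : ℤ)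
        * ((Fintype.card 𝔽 : ℤ) - 1) * (Fintype.card 𝔽 : ℤ)^3 + (Fintype.card 𝔽 : ℤ)^3
      = ((Fintype.card 𝔽 : ℤ) ^ (2*m) + ((Fintype.card 𝔽 : ℤ) - 1) * (Fintype.card 𝔽 : ℤ) ^ m)
          * (Fintype.card 𝔽 : ℤ)^2
        - ((Fintype.card 𝔽 : ℤ) - 1) * (Fintype.card 𝔽 : ℤ) ^ (2*m) * (Fintype.card 𝔽 : ℤ) := by
  have hq1 : 1 ≤ Fintype.card 𝔽 := Fintype.card_pos
  set u : Fin (2*m) → 𝔽 := P0.rep with hu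
  have hu0 : u ≠ 0 := P0.rep_nonzero
  have huQ : hypQ m u = 0 := h0
  have hpc := proj_count (𝔽 := 𝔽) (m := m) (fun v => hypQ m v = 0 ∧ hypB m u v = 0)
    (fun c hc v => by
      have hc2 : c^2 ≠ 0 := pow_ne_zero _ hc
      simp [hypQ_smul, hypB_smul_right, mul_eq_zero, hc, hc2])
  have hsplit := card_split (fun v : Fin (2*m) → 𝔽 => hypQ m v = 0 ∧ hypB m u v = 0)
    (fun v => v = 0)
  have hzero := card_pd_zero (fun v : Fin (2*m) → 𝔽 => hypQ m v = 0 ∧ hypB m u v = 0)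
    ⟨hypQ_zero, hypB_zero_right u⟩
  have hconesplit := cone_split u hu0 huQ
  have hcone := cone_card (𝔽 := 𝔽) m
  have hbridge : Nat.card {P : Projectivization 𝔽 (Fin (2*m) → 𝔽) // onQ P ∧ Collin P0 P}
      = Nat.card {P : Projectivization 𝔽 (Fin (2*m) → 𝔽) //
          hypQ m P.rep = 0 ∧ hypB m u P.rep = 0} :=
    Nat.card_congr (Equiv.subtypeEquivRight fun _ => Iff.rfl)
  rw [hzero] at hsplit
  have hM : (Nat.card {v : Fin (2*m) → 𝔽 // hypQ m v = 0 ∧ hypB m u v = 0} : ℤ)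
      = (Nat.card {P : Projectivization 𝔽 (Fin (2*m) → 𝔽) // onQ P ∧ Collin P0 P} : ℤ)
        * ((Fintype.card 𝔽 : ℤ) - 1) + 1 := by
    rw [hbridge]
    have := congrArg (fun t : ℕ => (t : ℤ)) hsplit
    push_cast at this ⊢
    rw [this]
    have := congrArg (fun t : ℕ => (t : ℤ)) hpc
    push_cast [hq1] at this
    rw [← this]
    ring
  have hcs := congrArg (fun t : ℕ => (t : ℤ)) hconesplit
  push_cast [hq1] at hcs
  rw [hM] at hcs
  have hcc := congrArg (fun t : ℕ => (t : ℤ)) hcone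
  push_cast [hq1] at hcc
  linear_combination (Fintype.card 𝔽 : ℤ)^2 * hcc - (Fintype.card 𝔽 : ℤ) * hcs

end interface

/-- Property (*): for every point `P` of the quadric `Q⁺(2n−1,q)`,
`Σ_{P1 ∈ P⊥} μ(P1) = x·θ_{n−2} + q^{n−1}·μ(P)`. -/
def PropStar (q n x : ℕ) {𝔽 : Type} [Field 𝔽]
    (μ : Projectivization 𝔽 (Fin (2 * n) → 𝔽) → ℤ) : Prop :=
  ∀ P ∈ Qset 𝔽 n,
    ∑ᶠ P1 ∈ perp P, μ P1 = (x : ℤ) * thgeom q (n - 1) + (q : ℤ) ^ (n - 1) * μ P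

/-- Property (**): for every pair `P1, P2` of non-collinear points of the quadric
`Q⁺(2n−1,q)`, `Σ_{P' ∈ {P1,P2}⊥} μ(P') = x·θ_{n−3} + q^{n−2}·(μ(P1)+μ(P2))`. -/
def PropStarStar (q n x : ℕ) {𝔽 : Type} [Field 𝔽]
    (μ : Projectivization 𝔽 (Fin (2 * n) → 𝔽) → ℤ) : Prop :=
  ∀ P1 ∈ Qset 𝔽 n, ∀ P2 ∈ Qset 𝔽 n, ¬ Collin P1 P2 →
    ∑ᶠ P' ∈ perp P1 ∩ perp P2, μ P' =
      (x : ℤ) * thgeom q (n - 2) + (q : ℤ) ^ (n - 2) * (μ P1 + μ P2)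


lemma collin_comm {𝔽 : Type} [Field 𝔽] {m : ℕ} {P P' : Projectivization 𝔽 (Fin (2*m) → 𝔽)} :
    Collin P P' ↔ Collin P' P := by
  unfold Collin
  rw [hypB_comm]

lemma thgeom_mul (q k : ℕ) : ((thgeom q k : ℕ) : ℤ) * ((q:ℤ) - 1) = (q:ℤ)^k - 1 := by
  unfold thgeom
  push_cast
  exact geom_sum_mul _ _

theorem sum_mu_eq
    {𝔽 : Type} [Field 𝔽] [Fintype 𝔽] (q n x : ℕ) (hq : Fintype.card 𝔽 = q) (hn : 2 ≤ n)
    (hx : 0 < x)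
    (μ : Projectivization 𝔽 (Fin (2 * n) → 𝔽) → ℤ)
    (hstar : PropStar q n x μ) :
    ∑ᶠ P ∈ Qset 𝔽 n, μ P = (x : ℤ) * thgeom q n := by
  classical
  subst hq
  have hq2 : 2 ≤ Fintype.card 𝔽 := Fintype.one_lt_card
  set Q : ℤ := (Fintype.card 𝔽 : ℤ) with hQdef
  have hQ2 : (2:ℤ) ≤ Q := by rw [hQdef]; exact_mod_cast hq2
  set r : ℤ := Q ^ (n-1) with hrdef
  have hr2 : (2:ℤ) ≤ r := le_trans hQ2 (le_self_pow₀ (by linarith) (by omega))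
  have hQn : Q^n = r * Q := by rw [hrdef, ← pow_succ, show n - 1 + 1 = n from by omega]
  have hQ2n : Q^(2*n) = (r*Q)*(r*Q) := by
    rw [show 2*n = n + n from by omega, pow_add, hQn]
  -- Finset setup
  have hQfin : (Qset 𝔽 n).Finite := Set.toFinite _
  set QF : Finset (Projectivization 𝔽 (Fin (2*n) → 𝔽)) := hQfin.toFinset with hQFdef
  have hmemQF : ∀ P, P ∈ QF ↔ onQ P := fun P => by
    rw [hQFdef, Set.Finite.mem_toFinset]; exact Iff.rfl
  have hgoal : ∑ᶠ P ∈ Qset 𝔽 n, μ P = ∑ P ∈ QF, μ P := by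
    conv_lhs => rw [← hQfin.coe_toFinset]
    exact finsum_mem_coe_finset μ QF
  rw [hgoal]
  set S : ℤ := ∑ P ∈ QF, μ P with hSdef
  -- perp as a filter of QF
  have hperpF : ∀ P : Projectivization 𝔽 (Fin (2*n) → 𝔽),
      (Set.toFinite (perp P)).toFinset = QF.filter (fun P1 => Collin P P1) := by
    intro P
    ext P1
    simp only [Set.Finite.mem_toFinset, Finset.mem_filter, hmemQF, perp, Set.mem_setOf_eq]
  have hstar' : ∀ P ∈ QF, ∑ P1 ∈ QF.filter (fun P1 => Collin P P1), μ P1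
      = (x:ℤ) * thgeom (Fintype.card 𝔽) (n-1) + Q^(n-1) * μ P := by
    intro P hP
    have h := hstar P ((hmemQF P).mp hP)
    rw [← hperpF P, ← finsum_mem_coe_finset μ, (Set.toFinite (perp P)).coe_toFinset]
    exact h
  -- double counting
  have hT2 : ∑ P ∈ QF, ∑ P1 ∈ QF.filter (fun P1 => Collin P P1), μ P1
      = ∑ P1 ∈ QF, ((QF.filter (fun P' => Collin P1 P')).card : ℤ) * μ P1 := by
    calc ∑ P ∈ QF, ∑ P1 ∈ QF.filter (fun P1 => Collin P P1), μ P1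
        = ∑ P ∈ QF, ∑ P1 ∈ QF, if Collin P P1 then μ P1 else 0 :=
          Finset.sum_congr rfl (fun P _ => Finset.sum_filter _ _)
      _ = ∑ P1 ∈ QF, ∑ P ∈ QF, if Collin P P1 then μ P1 else 0 := Finset.sum_comm
      _ = ∑ P1 ∈ QF, ((QF.filter (fun P => Collin P P1)).card : ℤ) * μ P1 :=
          Finset.sum_congr rfl (fun P1 _ => by
            rw [← Finset.sum_filter, Finset.sum_const, nsmul_eq_mul])
      _ = ∑ P1 ∈ QF, ((QF.filter (fun P' => Collin P1 P')).card : ℤ) * μ P1 :=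
          Finset.sum_congr rfl (fun P1 _ => by
            have : QF.filter (fun P => Collin P P1) = QF.filter (fun P' => Collin P1 P') :=
              Finset.filter_congr (fun P _ => by rw [collin_comm])
            rw [this])
  have hT1 : ∑ P ∈ QF, ∑ P1 ∈ QF.filter (fun P1 => Collin P P1), μ P1
      = (QF.card : ℤ) * ((x:ℤ) * thgeom (Fintype.card 𝔽) (n-1)) + Q^(n-1) * S := by
    rw [Finset.sum_congr rfl hstar', Finset.sum_add_distrib, Finset.sum_const,
      nsmul_eq_mul, ← Finset.mul_sum]
  -- cardinality identities
  have hacard : QF.card = Nat.card {P : Projectivization 𝔽 (Fin (2*n) → 𝔽) // onQ P} := by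
    rw [hQFdef, ← Set.ncard_eq_toFinset_card (Qset 𝔽 n) hQfin, ← Nat.card_coe_set_eq]
    rfl
  have ha := quadric_point_count (𝔽 := 𝔽) n
  rw [← hacard, ← hQdef, hQ2n, hQn] at ha
  have hb : ∀ P1 ∈ QF, ((QF.filter (fun P' => Collin P1 P')).card : ℤ) * (Q-1) * Q^3 + Q^3
      = ((r*Q)*(r*Q) + (Q-1)*(r*Q))*Q^2 - (Q-1)*((r*Q)*(r*Q))*Q := by
    intro P1 hP1
    have h1 : QF.filter (fun P' => Collin P1 P') = (Set.toFinite (perp P1)).toFinset :=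
      (hperpF P1).symm
    have h2 : (Set.toFinite (perp P1)).toFinset.card
        = Nat.card {P : Projectivization 𝔽 (Fin (2*n) → 𝔽) // onQ P ∧ Collin P1 P} := by
      rw [← Set.ncard_eq_toFinset_card (perp P1), ← Nat.card_coe_set_eq]
      rfl
    rw [h1, h2]
    have := perp_point_count (𝔽 := 𝔽) n P1 ((hmemQF P1).mp hP1)
    rw [← hQdef, hQ2n, hQn] at this
    exact this
  -- the W sum
  set W : ℤ := ∑ P1 ∈ QF, ((QF.filter (fun P' => Collin P1 P')).card : ℤ) * μ P1 with hWdef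
  have hW : (Q-1)*Q^3 * W
      = (((r*Q)*(r*Q)+(Q-1)*(r*Q))*Q^2 - (Q-1)*((r*Q)*(r*Q))*Q - Q^3) * S := by
    rw [hWdef, hSdef, Finset.mul_sum, Finset.mul_sum]
    apply Finset.sum_congr rfl
    intro P1 hP1
    linear_combination (μ P1) * (hb P1 hP1)
  have hM : W = (QF.card : ℤ) * ((x:ℤ) * thgeom (Fintype.card 𝔽) (n-1)) + r * S := by
    rw [← hT2, hT1, ← hrdef]
  have hθ1 : (thgeom (Fintype.card 𝔽) n : ℤ) * (Q - 1) = r*Q - 1 := by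
    rw [← hQn, hQdef]
    exact thgeom_mul _ _
  have hθ2 : (thgeom (Fintype.card 𝔽) (n-1) : ℤ) * (Q - 1) = r - 1 := by
    rw [hrdef, hQdef]
    exact thgeom_mul _ _
  -- final cancellation
  have hCne : ((Q-1)*Q^3*(r*r-1)) ≠ 0 := by
    have h1 : (0:ℤ) < Q - 1 := by linarith
    have h2 : (0:ℤ) < Q^3 := pow_pos (by linarith) 3
    have h3 : (0:ℤ) < r*r - 1 := by nlinarith
    exact ne_of_gt (mul_pos (mul_pos h1 h2) h3)
  have hkey : ((Q-1)*Q^3*(r*r-1)) * S = ((Q-1)*Q^3*(r*r-1)) * ((x:ℤ) * thgeom (Fintype.card 𝔽) n) := by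
    linear_combination (-(Q-1)) * hW + ((Q-1)^2*Q^3) * hM
      + ((Q-1)*Q^2*(x:ℤ)*(thgeom (Fintype.card 𝔽) (n-1) : ℤ)) * ha
      + (Q^2*(x:ℤ)*((r*Q)*(r*Q)+(Q-1)*(r*Q)-Q)) * hθ2
      + (-(Q^3)*(r*r-1)*(x:ℤ)) * hθ1
  exact mul_left_cancel₀ hCne hkey
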